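/- Assume τ ≥ 0. Then for every Λ ∈ S_{n,δ}, the set Θ♭(Λ) is nonempty; consequently θ̄(Λ) is defined for every Λ ∈ S_{n,δ}. -/

import Mathlib

namespace PanUnitary

/-- `part μ i` : the `i`-th largest element (0-indexed) of the multiset `μ`, `0` beyond.
Viewing a multiset of naturals as a partition (identified up to trailing zeros),
this is the `(i+1)`-st part. -/
def part (μ : Multiset ℕ) (i : ℕ) : ℕ := ((μ.sort (· ≤ ·)).reverse).getD i 0

/-- Remove the zero parts: the canonical (zero-free) representative of a partition. -/
def strip (μ : Multiset ℕ) : Multiset ℕ := μ.filter (fun x => 0 < x)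

/-- `transpose μ j` is the `(j+1)`-st part of the transposed (conjugate) partition. -/
def transpose (μ : Multiset ℕ) (j : ℕ) : ℕ := (μ.filter (fun x => j < x)).card

/-- `Preceq f g` : the partition whose parts are given by `f` is `⪯` the one given by `g`,
i.e. `g i - 1 ≤ f i ≤ g i` for all `i`. -/
def Preceq (f g : ℕ → ℕ) : Prop := ∀ i, g i ≤ f i + 1 ∧ f i ≤ g i

/-- An integer `δ` is admissible if it is even and nonnegative, or odd and negative. -/
def IsAdmissible (δ : ℤ) : Prop := (Even δ ∧ 0 ≤ δ) ∨ (Odd δ ∧ δ < 0)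

/-- `ε = 1` if `δ` is even, `ε = 0` if `δ` is odd. -/
def eps (δ : ℤ) : ℕ := if Even δ then 1 else 0

/-- `d (d + 1) / 2` where `d = |δ|`. -/
def halfTri (δ : ℤ) : ℕ := δ.natAbs * (δ.natAbs + 1) / 2

/-- A symbol: a pair of rows of natural numbers (the strict-decrease condition is
part of the predicate `Symbol.IsUnitary`). -/
structure Symbol where
  A : List ℕ
  B : List ℕ

def Symbol.defect (Λ : Symbol) : ℤ := (Λ.A.length : ℤ) - (Λ.B.length : ℤ)

/-- The row `(a_1, …, a_m)` gives the partition with parts `(a_i - e)/2 - (m - i)`. -/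
def upsRow (L : List ℕ) (e : ℕ) : Multiset ℕ :=
  ((L.mapIdx fun i a => (a - e) / 2 - (L.length - 1 - i) : List ℕ) : Multiset ℕ)

/-- The bipartition `Υ(Λ)` (canonical zero-free representatives). -/
def Symbol.Upsilon (Λ : Symbol) : Multiset ℕ × Multiset ℕ :=
  (strip (upsRow Λ.A (eps Λ.defect)), strip (upsRow Λ.B (1 - eps Λ.defect)))

/-- `Λ` is a unitary-type symbol of (admissible) defect `δ`. -/
def Symbol.IsUnitary (Λ : Symbol) (δ : ℤ) : Prop :=
  Λ.A.Pairwise (· > ·) ∧ Λ.B.Pairwise (· > ·) ∧ Λ.defect = δ ∧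
    (∀ a ∈ Λ.A, a % 2 = eps δ) ∧ (∀ b ∈ Λ.B, b % 2 = 1 - eps δ)

/-- The rank `2(|μ| + |ν|) + d(d+1)/2` of a unitary-type symbol. -/
def Symbol.rank (Λ : Symbol) : ℕ :=
  2 * (Λ.Upsilon.1.sum + Λ.Upsilon.2.sum) + halfTri Λ.defect

/-- Equivalence of symbols: same defect and same `Υ`. -/
def Symbol.Equiv (Λ Λ' : Symbol) : Prop :=
  Λ.defect = Λ'.defect ∧ Λ.Upsilon = Λ'.Upsilon

/-- Membership in `S_{n,δ}`: a unitary-type symbol of admissible defect `δ` and rank `n`. -/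
def InS (n : ℕ) (δ : ℤ) (Λ : Symbol) : Prop :=
  IsAdmissible δ ∧ Λ.IsUnitary δ ∧ Λ.rank = n

/-- `Σ min(x,y)` over all unordered pairs of (positions of) entries of the list. -/
def pairMinSum : List ℕ → ℕ
  | [] => 0
  | x :: xs => (xs.map (fun y => min x y)).sum + pairMinSum xs

/-- All entries of a symbol (both rows). -/
def Symbol.entries (Λ : Symbol) : List ℕ := Λ.A ++ Λ.B

/-- `ord(Λ) = Σ min(x,y) − Σ_{i=1}^{⌊N/2⌋} (N − 2i)²`. -/
def Symbol.ord (Λ : Symbol) : ℤ :=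
  (pairMinSum Λ.entries : ℤ) -
    ∑ i ∈ Finset.Icc 1 (Λ.entries.length / 2),
      ((Λ.entries.length : ℤ) - 2 * (i : ℤ)) ^ 2

/-- The shift of a unitary-type symbol. -/
def Symbol.shift (Λ : Symbol) : Symbol :=
  ⟨Λ.A.map (fun a => a + 2) ++ [eps Λ.defect],
   Λ.B.map (fun b => b + 2) ++ [1 - eps Λ.defect]⟩

/-- The defect `δ'` for the second member of the dual pair. -/
def deltaPrime (n n' : ℕ) (δ : ℤ) : ℤ :=
  if Even (n + n') then (if δ = 0 then 0 else -δ + 1) else -δ - 1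

/-- `τ = ((n' − d'(d'+1)/2) − (n − d(d+1)/2)) / 2`. -/
def tau (n n' : ℕ) (δ : ℤ) : ℚ :=
  (((n' : ℚ) - (halfTri (deltaPrime n n' δ) : ℚ)) - ((n : ℚ) - (halfTri δ : ℚ))) / 2

/-- `τ` as a natural number (equal to `τ` whenever `τ` is a nonnegative integer). -/
def tauNat (n n' : ℕ) (δ : ℤ) : ℕ :=
  ((n' + halfTri δ) - (n + halfTri (deltaPrime n n' δ))) / 2

/-- The set of (canonical, zero-free) bipartitions `(μ;ν)` with
`2(|μ|+|ν|) + d(d+1)/2 = n`; equivalently `|μ|+|ν| = (n − d(d+1)/2)/2`. -/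
def BipSet (n : ℕ) (δ : ℤ) : Set (Multiset ℕ × Multiset ℕ) :=
  {p | (∀ x ∈ p.1, 0 < x) ∧ (∀ x ∈ p.2, 0 < x) ∧ 2 * (p.1.sum + p.2.sum) + halfTri δ = n}

/-- The `⪯`-conditions (on transposes) defining the relation `Θ`, at the level of
bipartitions `p = Υ(Λ)`, `q = Υ(Λ')`. -/
def PrecCond (n n' : ℕ) (p q : Multiset ℕ × Multiset ℕ) : Prop :=
  if Even (n + n') then
    Preceq (transpose p.2) (transpose q.1) ∧ Preceq (transpose q.2) (transpose p.1)
  else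
    Preceq (transpose p.1) (transpose q.2) ∧ Preceq (transpose q.1) (transpose p.2)

/-- `Θ` at the level of bipartitions (classes of symbols). -/
def ThetaB (n n' : ℕ) (δ : ℤ) (p q : Multiset ℕ × Multiset ℕ) : Prop :=
  q ∈ BipSet n' (deltaPrime n n' δ) ∧ PrecCond n n' p q

/-- `Λ' ∈ Θ(Λ)` for symbols, where `Λ ∈ S_{n,δ}`. -/
def InTheta (n n' : ℕ) (δ : ℤ) (Λ Λ' : Symbol) : Prop :=
  InS n' (deltaPrime n n' δ) Λ' ∧ PrecCond n n' Λ.Upsilon Λ'.Upsilon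

/-- `Λ' ∈ Θ(Λ)_k`. -/
def InThetaK (n n' : ℕ) (δ : ℤ) (k : ℕ) (Λ Λ' : Symbol) : Prop :=
  InTheta n n' δ Λ Λ' ∧
    (if Even (n + n') then (Λ'.Upsilon.2.sum : ℤ) = (Λ.Upsilon.1.sum : ℤ) - (k : ℤ)
     else (Λ'.Upsilon.1.sum : ℤ) = (Λ.Upsilon.2.sum : ℤ) - (k : ℤ))

/-- Remove (one copy of) the largest part. -/
def mtail (μ : Multiset ℕ) : Multiset ℕ := μ.erase (part μ 0)

/-- `θ_k` at the level of bipartitions: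
even case: `(μ;ν) ↦ (sort(ν, τ+k); sort(μ_2, …, μ_{m_1}, μ_1 − k))`;
odd case: `(μ;ν) ↦ (sort(ν_2, …, ν_{m_2}, ν_1 − k); sort(μ, τ+k))`. -/
def thetaBip (n n' : ℕ) (δ : ℤ) (k : ℕ) (p : Multiset ℕ × Multiset ℕ) :
    Multiset ℕ × Multiset ℕ :=
  if Even (n + n') then
    (strip ((tauNat n n' δ + k) ::ₘ p.2), strip ((part p.1 0 - k) ::ₘ mtail p.1))
  else
    (strip ((part p.2 0 - k) ::ₘ mtail p.2), strip ((tauNat n n' δ + k) ::ₘ p.1))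

/-- The unitary-type symbol of defect `δ` with `Υ = p`, whose first row has `m1`
entries and second row `m2` entries (valid whenever `m1, m2` are large enough). -/
def symbolOfBip (δ : ℤ) (p : Multiset ℕ × Multiset ℕ) (m1 m2 : ℕ) : Symbol :=
  ⟨List.ofFn (fun i : Fin m1 => 2 * (part p.1 (i : ℕ) + (m1 - 1 - (i : ℕ))) + eps δ),
   List.ofFn (fun j : Fin m2 => 2 * (part p.2 (j : ℕ) + (m2 - 1 - (j : ℕ))) + (1 - eps δ))⟩

/-- A canonical representative symbol of defect `δ` with `Υ = p`. -/
def canonicalSymbol (δ : ℤ) (p : Multiset ℕ × Multiset ℕ) : Symbol :=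
  symbolOfBip δ p (max p.1.card ((p.2.card : ℤ) + δ).toNat)
    (((max p.1.card ((p.2.card : ℤ) + δ).toNat : ℤ) - δ).toNat)

/-- A symbol representing the class `θ_k(Λ)`. -/
def thetaSymbol (n n' : ℕ) (δ : ℤ) (k : ℕ) (Λ : Symbol) : Symbol :=
  canonicalSymbol (deltaPrime n n' δ) (thetaBip n n' δ k Λ.Upsilon)

/-- `K(Λ)`: `μ_1` in the even case, `ν_1` in the odd case. -/
def bigK (n n' : ℕ) (Λ : Symbol) : ℕ :=
  if Even (n + n') then part Λ.Upsilon.1 0 else part Λ.Upsilon.2 0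

/-- `ord` at the level of bipartitions (well defined on classes). -/
def ordB (δ : ℤ) (p : Multiset ℕ × Multiset ℕ) : ℤ := (canonicalSymbol δ p).ord

/-- Strict lexicographic order on partitions. -/
def PartLexLt (μ ν : Multiset ℕ) : Prop :=
  ∃ i, (∀ j < i, part μ j = part ν j) ∧ part μ i < part ν i

/-- The total order on `S_{n,δ}` (and on `S_{n',δ'}`), at the level of bipartitions;
it depends only on the parity of `n + n'`. -/
def BLt (n n' : ℕ) (p q : Multiset ℕ × Multiset ℕ) : Prop :=
  if Even (n + n') then
    p.1.sum < q.1.sum ∨ (p.1.sum = q.1.sum ∧ PartLexLt p.1 q.1) ∨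
      (p.1 = q.1 ∧ PartLexLt p.2 q.2)
  else
    p.2.sum < q.2.sum ∨ (p.2.sum = q.2.sum ∧ PartLexLt p.2 q.2) ∨
      (p.2 = q.2 ∧ PartLexLt p.1 q.1)

/-- `q ∈ Θ♭(p)` relative to a given partial function `bar` (playing the role of `θ̄`). -/
def InFlat (n n' : ℕ) (δ : ℤ)
    (bar : Multiset ℕ × Multiset ℕ → Option (Multiset ℕ × Multiset ℕ))
    (p q : Multiset ℕ × Multiset ℕ) : Prop :=
  ThetaB n n' δ p q ∧ ∀ r ∈ BipSet n δ, BLt n n' r p → bar r ≠ some q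

/-- `bar` is the partial function `θ̄` defined by recursion along the total order:
on each `p ∈ S_{n,δ}`, if `Θ♭(p) ≠ ∅` then `bar p` is defined and is the smallest
element (w.r.t. the total order) of maximal `ord` in `Θ♭(p)`. -/
def IsThetaBar (n n' : ℕ) (δ : ℤ)
    (bar : Multiset ℕ × Multiset ℕ → Option (Multiset ℕ × Multiset ℕ)) : Prop :=
  (∀ p, p ∉ BipSet n δ → bar p = none) ∧
  ∀ p ∈ BipSet n δ,
    ((∃ q, InFlat n n' δ bar p q) → ∃ q, bar p = some q) ∧
    ∀ q, bar p = some q →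
      InFlat n n' δ bar p q ∧
      (∀ r, InFlat n n' δ bar p r →
        ordB (deltaPrime n n' δ) r ≤ ordB (deltaPrime n n' δ) q) ∧
      (∀ r, InFlat n n' δ bar p r →
        ordB (deltaPrime n n' δ) r = ordB (deltaPrime n n' δ) q → r ≠ q → BLt n n' q r)



section Helpers

/-! ### Basic facts about `part` -/

lemma part_zero_idx (i : ℕ) : part (0 : Multiset ℕ) i = 0 := by
  simp [part]

lemma mem_part_iff {μ : Multiset ℕ} {y : ℕ} :
    y ∈ μ ↔ y ∈ (μ.sort (· ≤ ·)).reverse := by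
  rw [List.mem_reverse, Multiset.mem_sort]

lemma sorted_rev (μ : Multiset ℕ) :
    ((μ.sort (· ≤ ·)).reverse).Pairwise (fun a b => b ≤ a) := by
  rw [List.pairwise_reverse]
  exact Multiset.pairwise_sort _ _

lemma part0_max {μ : Multiset ℕ} {y : ℕ} (hy : y ∈ μ) : y ≤ part μ 0 := by
  have h := sorted_rev μ
  rw [mem_part_iff] at hy
  unfold part
  cases hL : (μ.sort (· ≤ ·)).reverse with
  | nil => rw [hL] at hy; simp at hy
  | cons a T =>
    rw [hL] at hy h
    rcases List.mem_cons.mp hy with rfl | hyT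
    · simp
    · simpa using (List.pairwise_cons.mp h).1 y hyT

lemma part0_mem {μ : Multiset ℕ} (h : μ ≠ 0) : part μ 0 ∈ μ := by
  rw [mem_part_iff]
  unfold part
  cases hL : (μ.sort (· ≤ ·)).reverse with
  | nil =>
    exfalso
    apply h
    have h2 : μ.sort (· ≤ ·) = [] := by simpa using congrArg List.reverse hL
    have h3 := Multiset.sort_eq μ (· ≤ ·)
    rw [h2] at h3
    simpa using h3.symm
  | cons a T => simp

lemma part0_le_iff {μ : Multiset ℕ} {j : ℕ} :
    part μ 0 ≤ j ↔ ∀ y ∈ μ, y ≤ j := by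
  constructor
  · intro h y hy; exact le_trans (part0_max hy) h
  · intro h
    by_cases hμ : μ = 0
    · subst hμ; rw [part_zero_idx]; omega
    · exact h _ (part0_mem hμ)

/-! ### Basic facts about `transpose`, `strip`, `mtail` -/

lemma transpose_zero_iff {μ : Multiset ℕ} {j : ℕ} :
    transpose μ j = 0 ↔ ∀ y ∈ μ, y ≤ j := by
  unfold transpose
  rw [Multiset.card_eq_zero, Multiset.filter_eq_nil]
  constructor
  · intro h y hy; have := h y hy; omega
  · intro h y hy; have := h y hy; omega

lemma transpose_eq_zero_iff_part {μ : Multiset ℕ} {j : ℕ} :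
    transpose μ j = 0 ↔ part μ 0 ≤ j := by
  rw [transpose_zero_iff, part0_le_iff]

lemma transpose_pos_iff {μ : Multiset ℕ} {j : ℕ} :
    1 ≤ transpose μ j ↔ j < part μ 0 := by
  have h := transpose_eq_zero_iff_part (μ := μ) (j := j)
  omega

lemma transpose_cons (a : ℕ) (s : Multiset ℕ) (j : ℕ) :
    transpose (a ::ₘ s) j = (if j < a then 1 else 0) + transpose s j := by
  unfold transpose
  rw [Multiset.filter_cons, Multiset.card_add]
  congr 1
  split <;> simp

lemma transpose_strip (s : Multiset ℕ) (j : ℕ) :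
    transpose (strip s) j = transpose s j := by
  unfold transpose strip
  rw [Multiset.filter_filter]
  congr 1
  apply Multiset.filter_congr
  intro x _
  constructor
  · intro h; exact h.1
  · intro h; exact ⟨h, by omega⟩

lemma strip_pos {s : Multiset ℕ} : ∀ y ∈ strip s, 0 < y :=
  fun _ hy => (Multiset.mem_filter.mp hy).2

lemma strip_sum (s : Multiset ℕ) : (strip s).sum = s.sum := by
  have h0 : (Multiset.filter (fun x => ¬ 0 < x) s).sum = 0 := by
    apply Multiset.sum_eq_zero
    intro x hx
    have := (Multiset.mem_filter.mp hx).2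
    omega
  have h1 := congrArg Multiset.sum (Multiset.filter_add_not (fun x => 0 < x) s)
  rw [Multiset.sum_add, h0] at h1
  unfold strip
  omega

lemma mem_le_sum {s : Multiset ℕ} {y : ℕ} (h : y ∈ s) : y ≤ s.sum := by
  obtain ⟨t, rfl⟩ := Multiset.exists_cons_of_mem h
  rw [Multiset.sum_cons]; omega

lemma cons_mtail {s : Multiset ℕ} (h : s ≠ 0) : part s 0 ::ₘ mtail s = s :=
  Multiset.cons_erase (part0_mem h)

lemma sum_decomp (s : Multiset ℕ) : s.sum = part s 0 + (mtail s).sum := by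
  by_cases h : s = 0
  · subst h; simp [mtail, part_zero_idx]
  · conv_lhs => rw [← cons_mtail h]
    rw [Multiset.sum_cons]

lemma mtail_mem {s : Multiset ℕ} {y : ℕ} (h : y ∈ mtail s) : y ∈ s :=
  Multiset.mem_of_mem_erase h

/-! ### Sums of transposes -/

lemma sum_ite_min (K N : ℕ) :
    ∑ j ∈ Finset.range N, (if j < K then (1:ℕ) else 0) = min K N := by
  induction N with
  | zero => simp
  | succ N ih =>
    rw [Finset.sum_range_succ, ih]
    by_cases h : N < K
    · rw [if_pos h]; omega
    · rw [if_neg h]; omega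

lemma sum_transpose (N : ℕ) (s : Multiset ℕ) (hb : ∀ y ∈ s, y ≤ N) :
    ∑ j ∈ Finset.range N, transpose s j = s.sum := by
  induction s using Multiset.induction_on with
  | empty => simp [transpose]
  | cons a t ih =>
    have ht : ∀ y ∈ t, y ≤ N := fun y hy => hb y (Multiset.mem_cons_of_mem hy)
    have ha : a ≤ N := hb a (Multiset.mem_cons_self a t)
    simp only [transpose_cons]
    rw [Finset.sum_add_distrib, ih ht, sum_ite_min, Multiset.sum_cons]
    omega

/-! ### The transpose determines a zero-free multiset -/

lemma transpose_count (s : Multiset ℕ) (k : ℕ) (hk : 0 < k) :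
    transpose s (k - 1) = s.count k + transpose s k := by
  classical
  have h2 := Multiset.filter_add_filter (fun x => x = k) (fun x => k < x) s
  have h3 : Multiset.filter (fun x => x = k ∧ k < x) s = 0 := by
    rw [Multiset.filter_eq_nil]
    intro a _ ha
    omega
  have h4 : Multiset.filter (fun x => x = k ∨ k < x) s
      = Multiset.filter (fun x => k - 1 < x) s := by
    apply Multiset.filter_congr
    intro x _
    omega
  have h5 : Multiset.filter (fun x => x = k) s = Multiset.filter (fun x => k = x) s := by
    apply Multiset.filter_congr
    intro x _
    omega
  rw [h3, h4, add_zero] at h2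
  have h6 := congrArg Multiset.card h2
  rw [Multiset.card_add, h5] at h6
  have h7 : s.count k = Multiset.card (Multiset.filter (fun x => k = x) s) :=
    Multiset.count_eq_card_filter_eq s k
  unfold transpose
  omega

lemma transpose_inj {a b : Multiset ℕ} (ha : ∀ y ∈ a, 0 < y) (hb : ∀ y ∈ b, 0 < y)
    (h : ∀ j, transpose a j = transpose b j) : a = b := by
  ext k
  rcases Nat.eq_zero_or_pos k with rfl | hk
  · rw [Multiset.count_eq_zero_of_notMem, Multiset.count_eq_zero_of_notMem]
    · intro hm; exact absurd (hb 0 hm) (lt_irrefl 0)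
    · intro hm; exact absurd (ha 0 hm) (lt_irrefl 0)
  · have h1 := transpose_count a k hk
    have h2 := transpose_count b k hk
    have h3 := h (k - 1)
    have h4 := h k
    omega

/-! ### The candidate first component `A ν t` -/

lemma transpose_A (ν : Multiset ℕ) (t j : ℕ) :
    transpose (strip ((part ν 0 + t) ::ₘ mtail ν)) j
      = (if j < part ν 0 + t then 1 else 0) + transpose (mtail ν) j := by
  rw [transpose_strip, transpose_cons]

lemma transpose_decomp (ν : Multiset ℕ) (j : ℕ) :
    transpose ν j = (if j < part ν 0 then 1 else 0) + transpose (mtail ν) j := by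
  by_cases h : ν = 0
  · subst h
    simp [mtail, part_zero_idx, transpose]
  · conv_lhs => rw [← cons_mtail h]
    rw [transpose_cons]

lemma transpose_mtail_zero {ν : Multiset ℕ} {j : ℕ} (h : part ν 0 ≤ j) :
    transpose (mtail ν) j = 0 := by
  rw [transpose_zero_iff]
  intro y hy
  exact le_trans (part0_max (mtail_mem hy)) h

lemma A_sum (ν : Multiset ℕ) (t : ℕ) :
    (strip ((part ν 0 + t) ::ₘ mtail ν)).sum = ν.sum + t := by
  rw [strip_sum, Multiset.sum_cons]
  have := sum_decomp ν
  omega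

lemma preceq_A (ν : Multiset ℕ) (t : ℕ) :
    Preceq (transpose ν) (transpose (strip ((part ν 0 + t) ::ₘ mtail ν))) := by
  intro j
  rw [transpose_A, transpose_decomp ν j]
  constructor <;> (split_ifs <;> omega)

lemma preceq_refl (f : ℕ → ℕ) : Preceq f f := fun _ => ⟨Nat.le_succ _, le_refl _⟩

lemma partlex_irrefl (z : Multiset ℕ) : ¬ PartLexLt z z := by
  rintro ⟨i, -, h⟩; exact lt_irrefl _ h

/-! ### Key lemma: every deletion of `A ν t` is lexicographically ≥ ν -/

lemma key_not_lex {ν x : Multiset ℕ} (hx : ∀ y ∈ x, 0 < y) (hν : ∀ y ∈ ν, 0 < y)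
    (hsum : x.sum = ν.sum) (t : ℕ)
    (H : Preceq (transpose x) (transpose (strip ((part ν 0 + t) ::ₘ mtail ν)))) :
    ¬ PartLexLt x ν := by
  have hle : ∀ j, transpose x j
      ≤ transpose (strip ((part ν 0 + t) ::ₘ mtail ν)) j := fun j => (H j).2
  have hge : ∀ j, transpose (strip ((part ν 0 + t) ::ₘ mtail ν)) j
      ≤ transpose x j + 1 := fun j => (H j).1
  set A := strip ((part ν 0 + t) ::ₘ mtail ν) with hAdef
  set N := ν.sum + t + 1 with hNdef
  have hxb : ∀ y ∈ x, y ≤ N := fun y hy => by have := mem_le_sum hy; omega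
  have hASum : A.sum = ν.sum + t := by rw [hAdef]; exact A_sum ν t
  have hAb : ∀ y ∈ A, y ≤ N := fun y hy => by
    have := mem_le_sum hy; omega
  have hSx : ∑ j ∈ Finset.range N, transpose x j = ν.sum := by
    rw [sum_transpose N x hxb, hsum]
  have hSA : ∑ j ∈ Finset.range N, transpose A j = ν.sum + t := by
    rw [sum_transpose N A hAb]
    exact hASum
  have hν1N : part ν 0 ≤ ν.sum := by
    by_cases h0 : ν = 0
    · subst h0; simp [part_zero_idx]
    · exact mem_le_sum (part0_mem h0)
  have hxpN : part x 0 ≤ ν.sum := by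
    by_cases h0 : x = 0
    · subst h0; rw [part_zero_idx]; omega
    · have := mem_le_sum (part0_mem h0); omega
  -- positivity profile of A
  have hPA : ∀ j, (1 ≤ transpose A j ↔ j < part ν 0 + t) := by
    intro j
    constructor
    · intro h
      by_contra hc
      push_neg at hc
      have e1 := transpose_A ν t j
      rw [← hAdef] at e1
      have e2 := transpose_mtail_zero (ν := ν) (j := j) (by omega)
      rw [if_neg (by omega), e2] at e1
      omega
    · intro h
      have e1 := transpose_A ν t j
      rw [← hAdef, if_pos h] at e1
      omega
  -- sums of positivity indicators
  have hsum_px : ∑ j ∈ Finset.range N, (if 1 ≤ transpose x j then (1:ℕ) else 0)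
      = part x 0 := by
    have h1 : ∀ j ∈ Finset.range N, (if 1 ≤ transpose x j then (1:ℕ) else 0)
        = (if j < part x 0 then (1:ℕ) else 0) := by
      intro j _
      by_cases h : 1 ≤ transpose x j
      · rw [if_pos h, if_pos (transpose_pos_iff.mp h)]
      · rw [if_neg h, if_neg (fun hc => h (transpose_pos_iff.mpr hc))]
    rw [Finset.sum_congr rfl h1, sum_ite_min]
    omega
  have hsum_pA : ∑ j ∈ Finset.range N, (if 1 ≤ transpose A j then (1:ℕ) else 0)
      = part ν 0 + t := by
    have h1 : ∀ j ∈ Finset.range N, (if 1 ≤ transpose A j then (1:ℕ) else 0)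
        = (if j < part ν 0 + t then (1:ℕ) else 0) := by
      intro j _
      by_cases h : 1 ≤ transpose A j
      · rw [if_pos h, if_pos ((hPA j).mp h)]
      · rw [if_neg h, if_neg (fun hc => h ((hPA j).mpr hc))]
    rw [Finset.sum_congr rfl h1, sum_ite_min]
    omega
  -- the deficit function
  have hSc : ∑ j ∈ Finset.range N, (transpose A j - transpose x j) = t := by
    have h1 : ∀ j ∈ Finset.range N,
        transpose x j + (transpose A j - transpose x j) = transpose A j :=
      fun j _ => by have := hle j; omega
    have h2 : ∑ j ∈ Finset.range N, transpose x j
        + ∑ j ∈ Finset.range N, (transpose A j - transpose x j)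
        = ∑ j ∈ Finset.range N, transpose A j := by
      rw [← Finset.sum_add_distrib]
      exact Finset.sum_congr rfl h1
    omega
  -- pointwise inequality of indicators
  have hpoint : ∀ j ∈ Finset.range N, (if 1 ≤ transpose A j then (1:ℕ) else 0)
      ≤ (if 1 ≤ transpose x j then (1:ℕ) else 0) + (transpose A j - transpose x j) := by
    intro j _
    have h1 := hle j
    have h2 := hge j
    split_ifs <;> omega
  have hSpoint : ∑ j ∈ Finset.range N, (if 1 ≤ transpose A j then (1:ℕ) else 0)
      ≤ ∑ j ∈ Finset.range N,
        ((if 1 ≤ transpose x j then (1:ℕ) else 0) + (transpose A j - transpose x j)) :=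
    Finset.sum_le_sum hpoint
  have hSsplit : ∑ j ∈ Finset.range N,
      ((if 1 ≤ transpose x j then (1:ℕ) else 0) + (transpose A j - transpose x j))
      = part x 0 + t := by
    rw [Finset.sum_add_distrib, hsum_px, hSc]
  -- Claim 1 : part ν 0 ≤ part x 0
  have C1 : part ν 0 ≤ part x 0 := by
    rw [hsum_pA, hSsplit] at hSpoint
    omega
  -- Claim 2 : equality forces x = ν
  have C2 : part x 0 = part ν 0 → x = ν := by
    intro heq
    have hEq : ∑ j ∈ Finset.range N, (if 1 ≤ transpose A j then (1:ℕ) else 0)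
        = ∑ j ∈ Finset.range N,
          ((if 1 ≤ transpose x j then (1:ℕ) else 0) + (transpose A j - transpose x j)) := by
      rw [hsum_pA, hSsplit]
      omega
    have hptEq := (Finset.sum_eq_sum_iff_of_le hpoint).mp hEq
    apply transpose_inj hx hν
    intro j
    by_cases hj1 : j < part ν 0
    · have hjN : j < N := by omega
      have hpt := hptEq j (Finset.mem_range.mpr hjN)
      have hA1 : 1 ≤ transpose A j := (hPA j).mpr (by omega)
      have h1 := hle j
      have h2 := hge j
      have hxA : transpose x j = transpose A j := by
        by_contra hc
        have hx0 : transpose x j = 0 := by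
          rw [if_pos hA1] at hpt
          by_cases hx1 : 1 ≤ transpose x j
          · rw [if_pos hx1] at hpt; omega
          · omega
        have := transpose_eq_zero_iff_part.mp hx0
        omega
      have e1 := transpose_A ν t j
      rw [← hAdef] at e1
      have e2 := transpose_decomp ν j
      rw [hxA, e1, e2, if_pos (by omega : j < part ν 0 + t), if_pos hj1]
    · push_neg at hj1
      have hx0 : transpose x j = 0 := transpose_eq_zero_iff_part.mpr (by omega)
      have hn0 : transpose ν j = 0 := transpose_eq_zero_iff_part.mpr (by omega)
      rw [hx0, hn0]
  -- conclude
  rintro ⟨i, hpre, hlt⟩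
  rcases Nat.eq_zero_or_pos i with rfl | hi
  · omega
  · have h0 := hpre 0 hi
    have hxe := C2 h0
    rw [hxe] at hlt
    exact lt_irrefl _ hlt

/-! ### The core exclusion argument -/

lemma core_exclusion (t : ℕ) (μ ν μ'' ν'' : Multiset ℕ)
    (hμ : ∀ y ∈ μ, 0 < y) (hν : ∀ y ∈ ν, 0 < y)
    (hμ'' : ∀ y ∈ μ'', 0 < y) (hν'' : ∀ y ∈ ν'', 0 < y)
    (hs : μ''.sum + ν''.sum = μ.sum + ν.sum)
    (h1 : Preceq (transpose ν'') (transpose (strip ((part ν 0 + t) ::ₘ mtail ν))))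
    (h2 : Preceq (transpose μ) (transpose μ''))
    (hlt : μ''.sum < μ.sum ∨ (μ''.sum = μ.sum ∧ PartLexLt μ'' μ)
      ∨ (μ'' = μ ∧ PartLexLt ν'' ν)) :
    False := by
  have hμle : ∀ j, transpose μ j ≤ transpose μ'' j := fun j => (h2 j).2
  set N := μ.sum + μ''.sum + 1 with hN
  have hb1 : ∀ y ∈ μ, y ≤ N := fun y hy => by have := mem_le_sum hy; omega
  have hb2 : ∀ y ∈ μ'', y ≤ N := fun y hy => by have := mem_le_sum hy; omega
  have hS1 := sum_transpose N μ hb1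
  have hS2 := sum_transpose N μ'' hb2
  have hsle : μ.sum ≤ μ''.sum := by
    rw [← hS1, ← hS2]
    exact Finset.sum_le_sum (fun j _ => hμle j)
  rcases hlt with h | ⟨hse, hlex⟩ | ⟨heq, hlex⟩
  · omega
  · have hpe : ∀ j ∈ Finset.range N, transpose μ j = transpose μ'' j := by
      rw [← Finset.sum_eq_sum_iff_of_le (fun j _ => hμle j)]
      omega
    have hμeq : μ = μ'' := by
      apply transpose_inj hμ hμ''
      intro j
      by_cases hj : j < N
      · exact hpe j (Finset.mem_range.mpr hj)
      · push_neg at hj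
        have e1 : transpose μ j = 0 :=
          transpose_zero_iff.mpr (fun y hy => by have := mem_le_sum hy; omega)
        have e2 : transpose μ'' j = 0 :=
          transpose_zero_iff.mpr (fun y hy => by have := mem_le_sum hy; omega)
        rw [e1, e2]
    rw [← hμeq] at hlex
    exact partlex_irrefl _ hlex
  · have hνs : ν''.sum = ν.sum := by
      rw [heq] at hs
      omega
    exact (key_not_lex hν'' hν hνs t h1) hlex

/-! ### Arithmetic: parity of triangular numbers and `τ` -/

lemma tri_succ_par (m : ℕ) :
    ∃ c, m * (m + 1) / 2 = c ∧ (m + 1) * (m + 2) / 2 = c + m + 1 := by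
  obtain ⟨c, hc⟩ := Nat.even_mul_succ_self m
  refine ⟨c, ?_, ?_⟩
  · omega
  · have h : (m + 1) * (m + 2) = m * (m + 1) + 2 * (m + 1) := by ring
    omega

lemma parity_lemma (n n' : ℕ) (δ : ℤ) (hδ : IsAdmissible δ) :
    (halfTri δ + halfTri (deltaPrime n n' δ) + (n + n')) % 2 = 0 := by
  unfold halfTri deltaPrime
  by_cases hp : Even (n + n')
  · have hnn : (n + n') % 2 = 0 := Nat.even_iff.mp hp
    rw [if_pos hp]
    by_cases h0 : δ = 0
    · rw [if_pos h0, h0]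
      simp
      omega
    · rw [if_neg h0]
      rcases hδ with ⟨he, hge⟩ | ⟨ho, hlt⟩
      · -- δ even, δ > 0 : |δ'| = |δ| - 1
        have hd2 : δ % 2 = 0 := Int.even_iff.mp he
        have hd : (-δ + 1).natAbs = δ.natAbs - 1 := by omega
        have hd1 : 1 ≤ δ.natAbs := by omega
        rw [hd]
        obtain ⟨c, hc1, hc2⟩ := tri_succ_par (δ.natAbs - 1)
        rw [show δ.natAbs - 1 + 1 = δ.natAbs by omega,
          show δ.natAbs - 1 + 2 = δ.natAbs + 1 by omega] at hc2
        rw [hc2, hc1]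
        have : δ.natAbs % 2 = 0 := by omega
        omega
      · -- δ odd, δ < 0 : |δ'| = |δ| + 1
        have hd2 : δ % 2 = 1 ∨ δ % 2 = -1 := by
          rcases Int.odd_iff.mp ho with h
          omega
        have hd : (-δ + 1).natAbs = δ.natAbs + 1 := by omega
        rw [hd]
        obtain ⟨c, hc1, hc2⟩ := tri_succ_par δ.natAbs
        rw [show δ.natAbs + 1 + 1 = δ.natAbs + 2 by omega] at hc2
        rw [hc2, hc1]
        have : δ.natAbs % 2 = 1 := by omega
        omega
  · have hnn : (n + n') % 2 = 1 := Nat.odd_iff.mp (Nat.not_even_iff_odd.mp hp)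
    rw [if_neg hp]
    rcases hδ with ⟨he, hge⟩ | ⟨ho, hlt⟩
    · -- δ even, δ ≥ 0 : |δ'| = |δ| + 1
      have hd2 : δ % 2 = 0 := Int.even_iff.mp he
      have hd : (-δ - 1).natAbs = δ.natAbs + 1 := by omega
      rw [hd]
      obtain ⟨c, hc1, hc2⟩ := tri_succ_par δ.natAbs
      rw [show δ.natAbs + 1 + 1 = δ.natAbs + 2 by omega] at hc2
      rw [hc2, hc1]
      have : δ.natAbs % 2 = 0 := by omega
      omega
    · -- δ odd, δ < 0 : |δ'| = |δ| - 1
      have hd2 : δ % 2 = 1 ∨ δ % 2 = -1 := by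
        rcases Int.odd_iff.mp ho with h
        omega
      have hd : (-δ - 1).natAbs = δ.natAbs - 1 := by omega
      have hd1 : 1 ≤ δ.natAbs := by omega
      rw [hd]
      obtain ⟨c, hc1, hc2⟩ := tri_succ_par (δ.natAbs - 1)
      rw [show δ.natAbs - 1 + 1 = δ.natAbs by omega,
        show δ.natAbs - 1 + 2 = δ.natAbs + 1 by omega] at hc2
      rw [hc2, hc1]
      have : δ.natAbs % 2 = 1 := by omega
      omega

end Helpers

/-- If `τ ≥ 0` then `Θ♭(Λ)` is nonempty for every `Λ ∈ S_{n,δ}`; consequently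
`θ̄(Λ)` is defined for every `Λ ∈ S_{n,δ}`. -/
theorem statement10 (n n' : ℕ) (δ : ℤ) (hδ : IsAdmissible δ) (hτ : 0 ≤ tau n n' δ) :
    ∀ bar : Multiset ℕ × Multiset ℕ → Option (Multiset ℕ × Multiset ℕ),
      IsThetaBar n n' δ bar → ∀ p ∈ BipSet n δ,
        (∃ q, InFlat n n' δ bar p q) ∧ ∃ q, bar p = some q := by
  intro bar hbar p hp
  have hp1 : ∀ y ∈ p.1, 0 < y := hp.1
  have hp2 : ∀ y ∈ p.2, 0 < y := hp.2.1
  have hp3 : 2 * (p.1.sum + p.2.sum) + halfTri δ = n := hp.2.2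
  have hpar := parity_lemma n n' δ hδ
  have hτ' : n + halfTri (deltaPrime n n' δ) ≤ n' + halfTri δ := by
    have h0 : ((n : ℚ) + (halfTri (deltaPrime n n' δ) : ℚ))
        ≤ ((n' : ℚ) + (halfTri δ : ℚ)) := by
      have h1 := hτ
      unfold tau at h1
      linarith
    exact_mod_cast h0
  have htau2 : 2 * tauNat n n' δ = (n' + halfTri δ) - (n + halfTri (deltaPrime n n' δ)) := by
    unfold tauNat
    omega
  have key : ∃ q, InFlat n n' δ bar p q := by
    by_cases hpE : Even (n + n')
    · refine ⟨(strip ((part p.2 0 + tauNat n n' δ) ::ₘ mtail p.2), p.1), ⟨⟨?_, ?_⟩, ?_⟩⟩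
      · -- membership in BipSet n' δ'
        refine ⟨strip_pos, hp1, ?_⟩
        simp only
        rw [A_sum]
        omega
      · -- PrecCond p q*
        unfold PrecCond
        rw [if_pos hpE]
        exact ⟨preceq_A p.2 _, preceq_refl _⟩
      · -- exclusion
        intro r hr hblt hbq
        have hIF := ((hbar.2 r hr).2 _ hbq).1
        have hPC := hIF.1.2
        unfold PrecCond at hPC
        rw [if_pos hpE] at hPC
        unfold BLt at hblt
        rw [if_pos hpE] at hblt
        have hr1 : ∀ y ∈ r.1, 0 < y := hr.1
        have hr2 : ∀ y ∈ r.2, 0 < y := hr.2.1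
        have hr3 : 2 * (r.1.sum + r.2.sum) + halfTri δ = n := hr.2.2
        exact core_exclusion (tauNat n n' δ) p.1 p.2 r.1 r.2 hp1 hp2 hr1 hr2
          (by omega) hPC.1 hPC.2 hblt
    · refine ⟨(p.2, strip ((part p.1 0 + tauNat n n' δ) ::ₘ mtail p.1)), ⟨⟨?_, ?_⟩, ?_⟩⟩
      · refine ⟨hp2, strip_pos, ?_⟩
        simp only
        rw [A_sum]
        omega
      · unfold PrecCond
        rw [if_neg hpE]
        exact ⟨preceq_A p.1 _, preceq_refl _⟩
      · intro r hr hblt hbq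
        have hIF := ((hbar.2 r hr).2 _ hbq).1
        have hPC := hIF.1.2
        unfold PrecCond at hPC
        rw [if_neg hpE] at hPC
        unfold BLt at hblt
        rw [if_neg hpE] at hblt
        have hr1 : ∀ y ∈ r.1, 0 < y := hr.1
        have hr2 : ∀ y ∈ r.2, 0 < y := hr.2.1
        have hr3 : 2 * (r.1.sum + r.2.sum) + halfTri δ = n := hr.2.2
        exact core_exclusion (tauNat n n' δ) p.2 p.1 r.2 r.1 hp2 hp1 hr2 hr1
          (by omega) hPC.1 hPC.2 hblt
  exact ⟨key, (hbar.2 p hp).1 key⟩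


end PanUnitary
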